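/- Let X, ℓ, m, n be positive integers with X > 1, ℓ > 1, and let p be an odd prime. If X^ℓ - 1 = 2^m · p^n and ℓ is odd, then ℓ is an odd prime, X - 1 = 2^m, (X^ℓ - 1)/(X - 1) = p^n, and p ≡ 1 (mod 2ℓ). -/

import Mathlib

-- geometric identity in ℕ
lemma geom_nat (y r : ℕ) (hy : 1 ≤ y) :
    (y - 1) * ∑ i ∈ Finset.range r, y ^ i = y ^ r - 1 := by
  have h := geom_sum_mul (y : ℤ) r
  have h1 : (1:ℕ) ≤ y ^ r := Nat.one_le_pow _ _ hy
  zify [hy, h1]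
  linarith

lemma odd_geom (y r : ℕ) (hy : Odd y) (hr : Odd r) :
    Odd (∑ i ∈ Finset.range r, y ^ i) := by
  rw [Nat.odd_iff, Finset.sum_nat_mod]
  simp [Nat.pow_mod, Nat.odd_iff.mp hy]
  exact Nat.odd_iff.mp hr

lemma geom_lb (y r : ℕ) (hy : 1 ≤ y) (hr : 1 ≤ r) :
    y ^ (r - 1) ≤ ∑ i ∈ Finset.range r, y ^ i :=
  Finset.single_le_sum (f := fun i => y ^ i) (fun i _ => Nat.zero_le _)
    (Finset.mem_range.mpr (by omega))

lemma geom_mod (q y r : ℕ) (hq : 1 < q) (hy : 1 ≤ y) (hdvd : q ∣ y - 1) :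
    (∑ i ∈ Finset.range r, y ^ i) % q = r % q := by
  have hyq : y % q = 1 := by
    obtain ⟨c, hc⟩ := hdvd
    have : y = q * c + 1 := by omega
    rw [this, Nat.mul_add_mod]
    exact Nat.mod_eq_of_lt hq
  rw [Finset.sum_nat_mod]
  simp [Nat.pow_mod, hyq]

-- a power of p dividing 2^m * p^n, odd case
lemma odd_dvd_pow (p m n s : ℕ) (hp : p.Prime) (hpodd : Odd p) (hs : Odd s)
    (hdvd : s ∣ 2 ^ m * p ^ n) : ∃ k, k ≤ n ∧ s = p ^ k := by
  have hcop : Nat.Coprime s (2 ^ m) := by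
    apply Nat.Coprime.pow_right
    exact hs.coprime_two_right
  have hsp : s ∣ p ^ n := hcop.dvd_of_dvd_mul_left hdvd
  obtain ⟨k, hk, hsk⟩ := (Nat.dvd_prime_pow hp).mp hsp
  exact ⟨k, hk, hsk⟩

lemma one_add_t_pow {R : Type*} [CommRing R] (t : R) (ht : t ^ 2 = 0) (i : ℕ) :
    (1 + t) ^ i = 1 + i * t := by
  induction i with
  | zero => simp
  | succ k ih =>
    rw [pow_succ, ih]
    have : (1 + (k:R) * t) * (1 + t) = 1 + ((k:R)+1) * t + (k:R) * t^2 := by ring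
    rw [this, ht]
    push_cast
    ring

lemma key_mod (p y : ℕ) (hpodd : Odd p) (hy : 1 ≤ y) (hdvd : p ∣ y - 1) :
    (∑ i ∈ Finset.range p, y ^ i) ≡ p [MOD p ^ 2] := by
  obtain ⟨c, hc⟩ := hdvd
  have hyc : y = 1 + p * c := by omega
  obtain ⟨d, hd⟩ : ∃ d, p - 1 = 2 * d := by
    have := Nat.odd_iff.mp hpodd; exact ⟨(p-1)/2, by omega⟩
  have hsum : (∑ i ∈ Finset.range p, i) = p * d := by
    have h2 : (∑ i ∈ Finset.range p, i) * 2 = p * (p - 1) := Finset.sum_range_id_mul_two p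
    rw [hd] at h2
    have h3 : p * (2 * d) = (p * d) * 2 := by ring
    omega
  rw [← ZMod.natCast_eq_natCast_iff]
  push_cast
  set t : ZMod (p ^ 2) := (p : ZMod (p^2)) * (c : ZMod (p^2)) with htdef
  have hpz : ((p:ZMod (p^2)))^2 = 0 := by
    rw [show ((p:ZMod (p^2)))^2 = ((p^2 : ℕ) : ZMod (p^2)) by push_cast; ring, ZMod.natCast_self]
  have ht : t ^ 2 = 0 := by
    rw [htdef, mul_pow, hpz, zero_mul]
  have hycast : (y : ZMod (p^2)) = 1 + t := by
    rw [hyc]; push_cast; ring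
  calc ∑ i ∈ Finset.range p, (y:ZMod (p^2)) ^ i
      = ∑ i ∈ Finset.range p, (1 + (i:ZMod (p^2)) * t) := by
        refine Finset.sum_congr rfl fun i _ => ?_
        rw [hycast, one_add_t_pow t ht]
    _ = (p : ZMod (p^2)) := by
        rw [Finset.sum_add_distrib]
        simp only [Finset.sum_const, Finset.card_range, nsmul_eq_mul, mul_one]
        rw [← Finset.sum_mul]
        have : (∑ i ∈ Finset.range p, (i:ZMod (p^2))) = ((p*d : ℕ) : ZMod (p^2)) := by
          rw [← hsum]; push_cast; rfl
        rw [this, htdef]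
        push_cast
        rw [show ((p:ZMod (p^2)) * d) * ((p:ZMod (p^2)) * c) = ((p:ZMod (p^2)))^2 * (d * c) by ring,
          hpz]
        ring

-- main contradiction lemma
lemma no_p_pow (p y m n : ℕ) (hp : p.Prime) (hpodd : Odd p) (hy : 1 < y) (hyodd : Odd y)
    (hdvd : p ∣ y - 1) (hdvd2 : y ^ p - 1 ∣ 2 ^ m * p ^ n) : False := by
  set S := ∑ i ∈ Finset.range p, y ^ i with hSdef
  have hgeom : (y - 1) * S = y ^ p - 1 := geom_nat y p (by omega)
  have hSdvd : S ∣ 2 ^ m * p ^ n := (Dvd.intro_left _ hgeom).trans hdvd2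
  have hSodd : Odd S := odd_geom y p hyodd hpodd
  obtain ⟨j, hjn, hSj⟩ := odd_dvd_pow p m n S hp hpodd hSodd hSdvd
  have hmod := key_mod p y hpodd (by omega) hdvd
  rw [← hSdef] at hmod
  have hyp : p + 1 ≤ y := by
    obtain ⟨c, hc⟩ := hdvd
    rcases Nat.eq_zero_or_pos c with h0 | h1
    · subst h0; simp at hc; omega
    · have : p ≤ p * c := Nat.le_mul_of_pos_right p h1
      omega
  have hp1 : 1 < p := hp.one_lt
  have hSgt : p < S := by
    have h1 : y ≤ y ^ (p - 1) := Nat.le_self_pow (by omega) y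
    have h2 : y ^ (p - 1) ≤ S := geom_lb y p (by omega) (by omega)
    omega
  have hpmod : p % p ^ 2 = p := by
    apply Nat.mod_eq_of_lt
    calc p < p * p := by nlinarith
      _ = p ^ 2 := (sq p).symm
  rcases Nat.lt_or_ge j 2 with hj2 | hj2
  · -- j ≤ 1, so S ≤ p, contradiction with S > p
    have : S ≤ p := by
      rw [hSj]
      calc p ^ j ≤ p ^ 1 := Nat.pow_le_pow_right (by omega) (by omega)
        _ = p := pow_one p
    omega
  · -- j ≥ 2, so p^2 ∣ S
    have hp2S : p ^ 2 ∣ S := hSj ▸ pow_dvd_pow p hj2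
    obtain ⟨e, he⟩ := hSj ▸ pow_dvd_pow p hj2
    have h0 : S % p ^ 2 = 0 := by rw [he, Nat.mul_mod_right]
    have := hmod
    unfold Nat.ModEq at this
    omega

theorem stmt_5 (X ℓ m n p : ℕ) (hX : 1 < X) (hℓ : 1 < ℓ) (hℓodd : Odd ℓ)
    (hm : 0 < m) (hn : 0 < n) (hp : p.Prime) (hpodd : Odd p)
    (h : X ^ ℓ - 1 = 2 ^ m * p ^ n) :
    ℓ.Prime ∧ X - 1 = 2 ^ m ∧ (∑ i ∈ Finset.range ℓ, X ^ i) = p ^ n ∧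
      p ≡ 1 [MOD 2 * ℓ] := by
  have hX1 : 1 ≤ X := by omega
  have hXpow : 1 ≤ X ^ ℓ := Nat.one_le_pow _ _ (by omega)
  -- X is odd
  have hXodd : Odd X := by
    rw [Nat.odd_iff]
    by_contra hc
    have hX2 : X % 2 = 0 := by omega
    have h1 : X ^ ℓ % 2 = 0 := by
      rw [Nat.pow_mod, hX2]
      simp [Nat.zero_pow (by omega : 0 < ℓ)]
    have h2 : 2 ∣ 2 ^ m * p ^ n := Dvd.dvd.mul_right (dvd_pow_self 2 (by omega)) _
    obtain ⟨k, hk⟩ := h2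
    omega
  set S := ∑ i ∈ Finset.range ℓ, X ^ i with hSdef
  have hgeom : (X - 1) * S = X ^ ℓ - 1 := geom_nat X ℓ hX1
  have hSdvd : S ∣ 2 ^ m * p ^ n := h ▸ Dvd.intro_left _ hgeom
  have hSodd : Odd S := odd_geom X ℓ hXodd hℓodd
  obtain ⟨k, hkn, hSk⟩ := odd_dvd_pow p m n S hp hpodd hSodd hSdvd
  have hSgt1 : 1 < S := by
    have h1 : X ≤ X ^ (ℓ - 1) := Nat.le_self_pow (by omega) X
    have h2 : X ^ (ℓ - 1) ≤ S := geom_lb X ℓ hX1 (by omega)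
    omega
  have hk1 : 1 ≤ k := by
    by_contra hc
    have : k = 0 := by omega
    rw [this, pow_zero] at hSk
    omega
  have hpS : p ∣ S := hSk ▸ dvd_pow_self p (by omega)
  -- p does not divide X - 1
  have hpX : ¬ p ∣ X - 1 := by
    intro hpd
    have hℓp : p ∣ ℓ := by
      have hmod : S % p = ℓ % p := geom_mod p X ℓ hp.one_lt hX1 hpd
      have h0 : S % p = 0 := Nat.dvd_iff_mod_eq_zero.mp hpS
      exact Nat.dvd_iff_mod_eq_zero.mpr (by omega)
    obtain ⟨e, he⟩ := hℓp
    have hdl : X ^ p - 1 ∣ X ^ ℓ - 1 := by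
      rw [he, pow_mul]
      simpa using Nat.sub_dvd_pow_sub_pow (X ^ p) 1 e
    exact no_p_pow p X m n hp hpodd hX hXodd hpd (h ▸ hdl)
  -- X - 1 = 2^m and S = p^n
  have hcop : Nat.Coprime p (X - 1) := (Nat.Prime.coprime_iff_not_dvd hp).mpr hpX
  have hmain : (X - 1) * p ^ k = 2 ^ m * p ^ n := by rw [← hSk, hgeom, h]
  have hnk : n ≤ k := by
    have hd1 : p ^ n ∣ (X - 1) * p ^ k := ⟨2 ^ m, by rw [hmain]; ring⟩
    have hd2 : p ^ n ∣ p ^ k := (Nat.Coprime.pow_left n hcop).dvd_of_dvd_mul_left hd1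
    exact (Nat.pow_dvd_pow_iff_le_right hp.one_lt).mp hd2
  have hkeq : k = n := by omega
  rw [hkeq] at hSk hmain
  have hX2m : X - 1 = 2 ^ m := by
    have hppos : 0 < p ^ n := Nat.pow_pos (n := n) hp.pos
    exact Nat.eq_of_mul_eq_mul_right hppos hmain
  -- ℓ is prime
  have hℓprime : ℓ.Prime := by
    set q := ℓ.minFac with hqdef
    have hq : q.Prime := Nat.minFac_prime (by omega)
    have hqℓ : q ∣ ℓ := Nat.minFac_dvd ℓ
    obtain ⟨r, hr⟩ := hqℓ
    have hrpos : 0 < r := by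
      rcases Nat.eq_zero_or_pos r with h0 | h1
      · subst h0; simp at hr; omega
      · exact h1
    have hr1 : r = 1 := by
      by_contra hrne
      have hr2 : 1 < r := by omega
      set y := X ^ q with hydef
      have hy1 : 1 < y := Nat.one_lt_pow hq.pos.ne' hX
      have hyodd : Odd y := hXodd.pow
      have hroddq : Odd q ∧ Odd r := Nat.odd_mul.mp (hr ▸ hℓodd)
      -- y^r - 1 = X^ℓ - 1
      have hyr : y ^ r - 1 = X ^ ℓ - 1 := by rw [hydef, ← pow_mul, ← hr]
      -- S_q := sum over range q, divides 2^m * p^n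
      have hSqgeom : (X - 1) * ∑ i ∈ Finset.range q, X ^ i = y - 1 := geom_nat X q hX1
      have hydvd : y - 1 ∣ 2 ^ m * p ^ n := by
        rw [← h, ← hyr]
        simpa using Nat.sub_dvd_pow_sub_pow y 1 r
      have hSqdvd : (∑ i ∈ Finset.range q, X ^ i) ∣ 2 ^ m * p ^ n :=
        (Dvd.intro_left _ hSqgeom).trans hydvd
      have hSqodd : Odd (∑ i ∈ Finset.range q, X ^ i) := odd_geom X q hXodd hroddq.1
      obtain ⟨j, hjn, hSqj⟩ := odd_dvd_pow p m n _ hp hpodd hSqodd hSqdvd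
      have hSqgt1 : 1 < ∑ i ∈ Finset.range q, X ^ i := by
        have h1 : X ≤ X ^ (q - 1) := Nat.le_self_pow (by have := hq.one_lt; omega) X
        have h2 : X ^ (q - 1) ≤ ∑ i ∈ Finset.range q, X ^ i :=
          geom_lb X q hX1 (by have := hq.one_lt; omega)
        omega
      have hj1 : 1 ≤ j := by
        by_contra hc
        have : j = 0 := by omega
        rw [this, pow_zero] at hSqj
        omega
      have hpy : p ∣ y - 1 := by
        have : p ∣ ∑ i ∈ Finset.range q, X ^ i := hSqj ▸ dvd_pow_self p (by omega)
        exact this.trans (Dvd.intro_left _ hSqgeom)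
      -- T := sum over range r of y^i
      have hTgeom : (y - 1) * ∑ i ∈ Finset.range r, y ^ i = y ^ r - 1 := geom_nat y r (by omega)
      have hTdvd : (∑ i ∈ Finset.range r, y ^ i) ∣ 2 ^ m * p ^ n := by
        refine (Dvd.intro_left _ hTgeom).trans ?_
        rw [hyr, h]
      have hTodd : Odd (∑ i ∈ Finset.range r, y ^ i) := odd_geom y r hyodd hroddq.2
      obtain ⟨j', hj'n, hTj⟩ := odd_dvd_pow p m n _ hp hpodd hTodd hTdvd
      have hTgt1 : 1 < ∑ i ∈ Finset.range r, y ^ i := by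
        have h1 : y ≤ y ^ (r - 1) := Nat.le_self_pow (by omega) y
        have h2 : y ^ (r - 1) ≤ ∑ i ∈ Finset.range r, y ^ i := geom_lb y r (by omega) (by omega)
        omega
      have hj'1 : 1 ≤ j' := by
        by_contra hc
        have : j' = 0 := by omega
        rw [this, pow_zero] at hTj
        omega
      have hpT : p ∣ ∑ i ∈ Finset.range r, y ^ i := hTj ▸ dvd_pow_self p (by omega)
      have hpr : p ∣ r := by
        have hmod : (∑ i ∈ Finset.range r, y ^ i) % p = r % p := geom_mod p y r hp.one_lt (by omega) hpy
        have h0 : (∑ i ∈ Finset.range r, y ^ i) % p = 0 := Nat.dvd_iff_mod_eq_zero.mp hpT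
        exact Nat.dvd_iff_mod_eq_zero.mpr (by omega)
      obtain ⟨e, he⟩ := hpr
      have hdl : y ^ p - 1 ∣ 2 ^ m * p ^ n := by
        rw [← h, ← hyr, he, pow_mul]
        simpa using Nat.sub_dvd_pow_sub_pow (y ^ p) 1 e
      exact no_p_pow p y m n hp hpodd hy1 hyodd hpy hdl
    subst hr1
    rw [mul_one] at hr
    rw [hr]
    exact hq
  -- p ≡ 1 [MOD 2ℓ]
  haveI : Fact p.Prime := ⟨hp⟩
  have hXℓ1 : ((X : ZMod p)) ^ ℓ = 1 := by
    have : (X ^ ℓ : ℕ) ≡ 1 [MOD p] := by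
      have hd : p ∣ X ^ ℓ - 1 := h ▸ Dvd.dvd.mul_left (dvd_pow_self p (by omega)) _
      exact ((Nat.modEq_iff_dvd' hXpow).mpr hd).symm
    have := (ZMod.natCast_eq_natCast_iff _ _ _).mpr this
    push_cast at this
    exact this
  have hordℓ : orderOf (X : ZMod p) = ℓ := by
    have hdvd : orderOf (X : ZMod p) ∣ ℓ := orderOf_dvd_of_pow_eq_one hXℓ1
    rcases (Nat.dvd_prime hℓprime).mp hdvd with h1 | h2
    · exfalso
      have hX1' : (X : ZMod p) = 1 := orderOf_eq_one_iff.mp h1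
      have : (X : ℕ) ≡ 1 [MOD p] := by
        have := (ZMod.natCast_eq_natCast_iff X 1 p).mp (by push_cast; exact hX1')
        exact this
      exact hpX ((Nat.modEq_iff_dvd' hX1).mp this.symm)
    · exact h2
  have hℓdvd : ℓ ∣ p - 1 := by
    have hXne : (X : ZMod p) ≠ 0 := by
      intro h0
      rw [h0, zero_pow (by omega : ℓ ≠ 0)] at hXℓ1
      exact zero_ne_one hXℓ1
    have := ZMod.pow_card_sub_one_eq_one hXne
    have hdvd := orderOf_dvd_of_pow_eq_one this
    rw [hordℓ] at hdvd
    exact hdvd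
  have hmod2ℓ : p ≡ 1 [MOD 2 * ℓ] := by
    symm
    rw [Nat.modEq_iff_dvd' hp.one_le]
    obtain ⟨a, ha⟩ := hℓdvd
    have h2 : 2 ∣ p - 1 := by
      have := Nat.odd_iff.mp hpodd
      have hple := hp.two_le
      omega
    obtain ⟨b, hb⟩ := h2
    have haeven : Even a := by
      rcases Nat.even_or_odd a with he | ho
      · exact he
      · exfalso
        have : Odd (ℓ * a) := Nat.odd_mul.mpr ⟨hℓodd, ho⟩
        rw [← ha, Nat.odd_iff] at this
        omega
    obtain ⟨c, hc⟩ := haeven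
    exact ⟨c, by rw [ha, hc]; ring⟩
  exact ⟨hℓprime, hX2m, hSk, hmod2ℓ⟩
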